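/- Let c, z ∈ ℂ and let λ₇ : FVB₂ → GL₂(ℂ) be the homomorphism defined by λ₇(σ₁) = [[1,0],[c,-1]] and λ₇(ρ₁) = [[-1,0],[z,1]]. Then λ₇ is injective if and only if z ≠ -c. -/

import Mathlib

/-- The relations of the flat virtual braid group on two strands:
`σ₁² = 1` and `ρ₁² = 1`. -/
def FVB2rels : Set (FreeGroup Bool) :=
  {FreeGroup.of true * FreeGroup.of true, FreeGroup.of false * FreeGroup.of false}

/-- The flat virtual braid group `FVB₂ = ⟨σ₁, ρ₁ | σ₁² = ρ₁² = 1⟩`. -/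
abbrev FVB2 : Type := PresentedGroup FVB2rels

/-- The generator `σ₁` of `FVB₂`. -/
def σ1 : FVB2 := PresentedGroup.of true

/-- The generator `ρ₁` of `FVB₂`. -/
def ρ1 : FVB2 := PresentedGroup.of false

lemma sq_sigma : σ1 * σ1 = 1 := by
  show (QuotientGroup.mk (FreeGroup.of true) : FVB2) * QuotientGroup.mk (FreeGroup.of true) = 1
  refine (QuotientGroup.eq_one_iff (FreeGroup.of true * FreeGroup.of true)).mpr ?_
  exact Subgroup.subset_normalClosure (Or.inl rfl)

lemma sq_rho : ρ1 * ρ1 = 1 := by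
  show (QuotientGroup.mk (FreeGroup.of false) : FVB2) * QuotientGroup.mk (FreeGroup.of false) = 1
  refine (QuotientGroup.eq_one_iff (FreeGroup.of false * FreeGroup.of false)).mpr ?_
  exact Subgroup.subset_normalClosure (Or.inr rfl)

lemma inv_sigma : σ1⁻¹ = σ1 := inv_eq_of_mul_eq_one_right sq_sigma
lemma inv_rho : ρ1⁻¹ = ρ1 := inv_eq_of_mul_eq_one_right sq_rho

lemma sigma_conj (m : ℤ) : σ1 * (σ1 * ρ1) ^ m = (σ1 * ρ1) ^ (-m) * σ1 := by
  have key : σ1 * (σ1 * ρ1) * σ1⁻¹ = (σ1 * ρ1)⁻¹ := by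
    rw [inv_sigma, mul_inv_rev, inv_sigma, inv_rho, ← mul_assoc, sq_sigma, one_mul]
  calc σ1 * (σ1 * ρ1) ^ m
      = (σ1 * (σ1 * ρ1) * σ1⁻¹) ^ m * σ1 := by
        rw [conj_zpow, inv_sigma, mul_assoc, mul_assoc, sq_sigma, mul_one]
    _ = (σ1 * ρ1) ^ (-m) * σ1 := by rw [key, inv_zpow']

lemma sigma_conj' (m : ℤ) (w : FVB2) :
    σ1 * ((σ1 * ρ1) ^ m * w) = (σ1 * ρ1) ^ (-m) * (σ1 * w) := by
  rw [← mul_assoc, sigma_conj, mul_assoc]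

/-- Normal form in the infinite dihedral group. -/
lemma normal_form (g : FVB2) : ∃ (n : ℤ) (e : Bool), g = (σ1 * ρ1) ^ n * (cond e σ1 1) := by
  have hmem : g ∈ Subgroup.closure (Set.range (PresentedGroup.of (rels := FVB2rels))) := by
    rw [PresentedGroup.closure_range_of]; trivial
  induction hmem using Subgroup.closure_induction with
  | mem x hx =>
    obtain ⟨b, rfl⟩ := hx
    cases b
    · refine ⟨-1, true, ?_⟩
      show ρ1 = (σ1 * ρ1) ^ (-1 : ℤ) * σ1
      rw [zpow_neg_one, mul_inv_rev, inv_sigma, inv_rho, mul_assoc, sq_sigma, mul_one]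
    · exact ⟨0, true, by simp [σ1]⟩
  | one => exact ⟨0, false, by simp⟩
  | mul x y _ _ hx hy =>
    obtain ⟨n, e, rfl⟩ := hx
    obtain ⟨m, d, rfl⟩ := hy
    cases e with
    | false =>
      exact ⟨n + m, d, by rw [zpow_add]; simp [mul_assoc]⟩
    | true =>
      cases d with
      | false =>
        refine ⟨n - m, true, ?_⟩
        show (σ1*ρ1)^n * σ1 * ((σ1*ρ1)^m * 1) = (σ1*ρ1)^(n-m) * σ1
        rw [mul_one, mul_assoc, sigma_conj, ← mul_assoc, ← zpow_add, ← sub_eq_add_neg]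
      | true =>
        refine ⟨n - m, false, ?_⟩
        show (σ1*ρ1)^n * σ1 * ((σ1*ρ1)^m * σ1) = (σ1*ρ1)^(n-m) * 1
        rw [mul_one, mul_assoc, sigma_conj' m σ1, sq_sigma, mul_one,
          ← zpow_add, ← sub_eq_add_neg]
  | inv x _ hx =>
    obtain ⟨n, e, rfl⟩ := hx
    cases e with
    | false => exact ⟨-n, false, by simp⟩
    | true =>
      refine ⟨n, true, ?_⟩
      show ((σ1*ρ1)^n * σ1)⁻¹ = (σ1*ρ1)^n * σ1
      rw [mul_inv_rev, inv_sigma, ← zpow_neg, sigma_conj, neg_neg]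


/-- The representation λ₇ of `FVB₂` with `σ₁ ↦ [[1,0],[c,-1]]`, `ρ₁ ↦ [[-1,0],[z,1]]`
is faithful if and only if `z ≠ -c`. -/
theorem stmt6 (c z : ℂ) (f : FVB2 →* GL (Fin 2) ℂ)
    (hσ : (f σ1 : Matrix (Fin 2) (Fin 2) ℂ) = !![1, 0; c, -1])
    (hρ : (f ρ1 : Matrix (Fin 2) (Fin 2) ℂ) = !![-1, 0; z, 1]) :
    Function.Injective f ↔ z ≠ -c := by
  set t : ℂ := -(c + z) with ht
  have hne : (-1 : ℂ) ≠ 0 := by norm_num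
  have hu : ((f (σ1 * ρ1) : GL (Fin 2) ℂ) : Matrix (Fin 2) (Fin 2) ℂ)
      = !![-1, 0; t, -1] := by
    rw [map_mul, Units.val_mul, hσ, hρ]
    ext i j; fin_cases i <;> fin_cases j <;>
      simp [Matrix.mul_apply, Fin.sum_univ_two, ht] <;> ring
  have huinv : ((f (σ1 * ρ1))⁻¹ : GL (Fin 2) ℂ).val = !![-1, 0; -t, -1] := by
    rw [Matrix.coe_units_inv, hu]
    apply Matrix.inv_eq_right_inv
    ext i j; fin_cases i <;> fin_cases j <;> simp [Matrix.mul_apply, Fin.sum_univ_two] <;> ring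
  have hpow : ∀ n : ℤ, ((f (σ1 * ρ1) ^ n : GL (Fin 2) ℂ) : Matrix (Fin 2) (Fin 2) ℂ)
      = !![(-1:ℂ)^n, 0; (-1:ℂ)^n * (-(n : ℂ) * t), (-1:ℂ)^n] := by
    intro n
    induction n using Int.induction_on with
    | zero => ext i j; fin_cases i <;> fin_cases j <;> simp
    | succ k ih =>
      rw [zpow_add_one, Units.val_mul, ih, hu]
      ext i j
      fin_cases i <;> fin_cases j <;>
        simp [Matrix.mul_apply, Fin.sum_univ_two, zpow_add₀ hne, zpow_sub₀ hne] <;>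
        push_cast <;> ring
    | pred k ih =>
      rw [zpow_sub_one, Units.val_mul, ih, huinv]
      ext i j
      fin_cases i <;> fin_cases j <;>
        simp [Matrix.mul_apply, Fin.sum_univ_two, zpow_add₀ hne, zpow_sub₀ hne] <;>
        push_cast <;> ring
  constructor
  · intro hinj hz
    have ht0 : t = 0 := by rw [ht, hz]; ring
    have h1 : f ((σ1 * ρ1) ^ (2:ℤ)) = 1 := by
      apply Units.ext
      rw [map_zpow, hpow, ht0]
      ext i j; fin_cases i <;> fin_cases j <;> norm_num
    have h2 : (σ1 * ρ1) ^ (2:ℤ) = 1 := hinj (by rw [h1, map_one])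
    have hrels : ∀ r ∈ FVB2rels, (FreeGroup.lift
        (fun b => if b then Equiv.neg ℤ else (Equiv.neg ℤ).trans (Equiv.addLeft 1))) r = 1 := by
      rintro r (rfl | rfl) <;>
        · ext x
          simp [Equiv.Perm.mul_apply]
    have hφσ : PresentedGroup.toGroup hrels σ1 = Equiv.neg ℤ := PresentedGroup.toGroup.of hrels
    have hφρ : PresentedGroup.toGroup hrels ρ1 = (Equiv.neg ℤ).trans (Equiv.addLeft 1) :=
      PresentedGroup.toGroup.of hrels
    have h3 := congrArg (PresentedGroup.toGroup hrels) h2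
    rw [map_zpow, map_mul, hφσ, hφρ, map_one] at h3
    rw [show (2:ℤ) = 1 + 1 by norm_num, zpow_add, zpow_one] at h3
    have h4 := congrArg (fun (p : Equiv.Perm ℤ) => p 0) h3
    simp [Equiv.Perm.mul_apply] at h4
  · intro hz
    have ht0 : t ≠ 0 := by
      rw [ht]; intro h; apply hz; linear_combination -h
    rw [injective_iff_map_eq_one]
    intro g hg
    obtain ⟨n, e, rfl⟩ := normal_form g
    cases e with
    | false =>
      rw [cond, mul_one] at hg ⊢
      rw [map_zpow] at hg
      have h10 := congrArg (fun (u : GL (Fin 2) ℂ) => (u : Matrix (Fin 2) (Fin 2) ℂ) 1 0) hg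
      simp only [hpow] at h10
      have h10' : (-1:ℂ)^n * (-(n:ℂ) * t) = 0 := by simpa using h10
      have hn : n = 0 := by
        rcases mul_eq_zero.mp h10' with h | h
        · exact absurd h (zpow_ne_zero n hne)
        · rcases mul_eq_zero.mp h with h | h
          · exact_mod_cast neg_eq_zero.mp h
          · exact absurd h ht0
      rw [hn, zpow_zero]
    | true =>
      exfalso
      rw [cond] at hg
      rw [map_mul, map_zpow] at hg
      have h00 := congrArg (fun (u : GL (Fin 2) ℂ) => (u : Matrix (Fin 2) (Fin 2) ℂ) 0 0) hg
      have h11 := congrArg (fun (u : GL (Fin 2) ℂ) => (u : Matrix (Fin 2) (Fin 2) ℂ) 1 1) hg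
      simp only [Units.val_mul, hpow, hσ] at h00 h11
      simp [Matrix.mul_apply, Fin.sum_univ_two] at h00 h11
      rw [h00] at h11
      norm_num at h11
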